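/- arXiv:2202.09872 — 4 statements merged into one kernel-verified Lean document; each statement's English description precedes it below -/
import Mathlib

section
/- In the setting of the previous statement, with r = sup_{v∈X₀} (f(v) − a(û,v))/‖v‖_a the local dual residual, any Galerkin solution û₊ in an enlarged subspace Z₊ ⊇ Z + span{u_loc} satisfies ‖u − û₊‖²_a ≤ ‖u − û‖²_a − r². -/
/-- One-step error reduction of the enrichment step: enlarging the Galerkin space by the
local correction decreases the squared energy error by the squared local dual residual. -/
theorem enrichment_one_step_reduction
    {X : Type*} [NormedAddCommGroup X] [InnerProductSpace ℝ X] [CompleteSpace X]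
    (a : X → X → ℝ)
    (hbilin₁ : ∀ v, IsLinearMap ℝ (fun w => a w v))
    (hbilin₂ : ∀ w, IsLinearMap ℝ (a w))
    (hsymm : ∀ w v, a w v = a v w)
    (c₀ : ℝ) (hc₀ : 0 < c₀) (hcoer : ∀ w, c₀ * ‖w‖ ^ 2 ≤ a w w)
    (Ca : ℝ) (hcont : ∀ w v, |a w v| ≤ Ca * ‖w‖ * ‖v‖)
    (f : X →L[ℝ] ℝ)
    (u : X) (hu : ∀ v, a u v = f v)
    (Z : Submodule ℝ X) (hZ : IsClosed (Z : Set X))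
    (uh : X) (huhZ : uh ∈ Z) (hgal : ∀ v ∈ Z, a uh v = f v)
    (X₀ : Submodule ℝ X) (hX₀ : IsClosed (X₀ : Set X))
    (uloc : X) (hulocmem : uloc ∈ X₀)
    (huloc : ∀ v ∈ X₀, a (uh + uloc) v = f v)
    (r : ℝ)
    (hr : r = ⨆ v : X₀, (f (v : X) - a uh (v : X)) / Real.sqrt (a (v : X) (v : X)))
    (Zp : Submodule ℝ X) (hZp : IsClosed (Zp : Set X))
    (hZZp : Z ⊔ Submodule.span ℝ {uloc} ≤ Zp)
    (uhp : X) (huhpZ : uhp ∈ Zp) (hgalp : ∀ v ∈ Zp, a uhp v = f v) :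
    a (u - uhp) (u - uhp) ≤ a (u - uh) (u - uh) - r ^ 2 := by

  -- basic bilinearity helpers
  have hsub1 : ∀ x y v : X, a (x - y) v = a x v - a y v := fun x y v => (hbilin₁ v).map_sub x y
  have hadd1 : ∀ x y v : X, a (x + y) v = a x v + a y v := fun x y v => (hbilin₁ v).map_add x y
  have hsub2 : ∀ w x y : X, a w (x - y) = a w x - a w y := fun w x y => (hbilin₂ w).map_sub x y
  have hnn : ∀ w : X, 0 ≤ a w w := fun w => le_trans (by positivity) (hcoer w)
  have hzero : ∀ v : X, a v v = 0 → v = 0 := by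
    intro v hv
    have := hcoer v
    rw [hv] at this
    have : ‖v‖ ^ 2 ≤ 0 := by nlinarith
    have : ‖v‖ = 0 := by nlinarith [sq_nonneg ‖v‖, norm_nonneg v]
    simpa using this
  -- Cauchy-Schwarz for a
  have hCS : ∀ v w : X, (a v w) ^ 2 ≤ a v v * a w w := by
    intro v w
    have hsmul1 : ∀ (t : ℝ) (x y : X), a (t • x) y = t * a x y := by
      intro t x y
      have := (hbilin₁ y).map_smul t x
      simpa [smul_eq_mul] using this
    have hsmul2 : ∀ (w : X) (t : ℝ) (x : X), a w (t • x) = t * a w x := by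
      intro w t x
      have := (hbilin₂ w).map_smul t x
      simpa [smul_eq_mul] using this
    have hq : ∀ t : ℝ, 0 ≤ a w w * (t * t) + (2 * a v w) * t + a v v := by
      intro t
      have hexp : a (v + t • w) (v + t • w)
          = a w w * (t * t) + (2 * a v w) * t + a v v := by
        rw [hadd1, (hbilin₂ v).map_add, (hbilin₂ (t • w)).map_add,
          hsmul1, hsmul1, hsmul2, hsmul2, hsymm w v]
        ring
      rw [← hexp]; exact hnn _
    have hd := discrim_le_zero hq
    rw [discrim] at hd
    nlinarith
  -- residual identity on X₀
  have hres : ∀ v ∈ X₀, f v - a uh v = a uloc v := by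
    intro v hv
    have := huloc v hv
    rw [hadd1] at this
    linarith
  -- r equals the energy norm of uloc
  have hrval : r = Real.sqrt (a uloc uloc) := by
    have hub : ∀ v : X₀, (f (v : X) - a uh (v : X)) / Real.sqrt (a (v : X) (v : X))
        ≤ Real.sqrt (a uloc uloc) := by
      intro v
      rw [hres (v : X) v.2]
      rcases eq_or_lt_of_le (hnn (v : X)) with h0 | hpos
      · have hv0 : (v : X) = 0 := hzero _ h0.symm
        rw [hv0]
        simp [(hbilin₂ uloc).map_zero, Real.sqrt_nonneg]
      · rw [div_le_iff₀ (Real.sqrt_pos.mpr hpos)]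
        calc a uloc (v : X) ≤ |a uloc (v : X)| := le_abs_self _
          _ = Real.sqrt ((a uloc (v : X)) ^ 2) := (Real.sqrt_sq_eq_abs _).symm
          _ ≤ Real.sqrt (a uloc uloc * a (v : X) (v : X)) :=
              Real.sqrt_le_sqrt (hCS _ _)
          _ = Real.sqrt (a uloc uloc) * Real.sqrt (a (v : X) (v : X)) :=
              Real.sqrt_mul (hnn _) _
    rcases eq_or_ne uloc 0 with h0 | h0
    · have : ∀ v : X₀, (f (v : X) - a uh (v : X)) / Real.sqrt (a (v : X) (v : X)) = 0 := by
        intro v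
        rw [hres (v : X) v.2, h0]
        simp [(hbilin₁ (v : X)).map_zero]
      rw [hr, h0]
      simp only [this, ciSup_const]
      simp [(hbilin₁ (0 : X)).map_zero]
    · have hpos : 0 < a uloc uloc := by
        rcases eq_or_lt_of_le (hnn uloc) with h | h
        · exact absurd (hzero _ h.symm) h0
        · exact h
      have hbdd : BddAbove (Set.range fun v : X₀ =>
          (f (v : X) - a uh (v : X)) / Real.sqrt (a (v : X) (v : X))) :=
        ⟨Real.sqrt (a uloc uloc), by rintro x ⟨v, rfl⟩; exact hub v⟩
      have hle : r ≤ Real.sqrt (a uloc uloc) := by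
        rw [hr]; exact ciSup_le hub
      have hge : Real.sqrt (a uloc uloc) ≤ r := by
        rw [hr]
        have := le_ciSup hbdd (⟨uloc, hulocmem⟩ : X₀)
        simpa [hres uloc hulocmem, Real.div_sqrt] using this
      linarith
  -- memberships in Zp
  have huhZp : uh ∈ Zp := hZZp (le_sup_left (a := Z) huhZ)
  have hulocZp : uloc ∈ Zp :=
    hZZp (le_sup_right (a := Z) (Submodule.mem_span_singleton_self uloc))
  have hwZp : uh + uloc ∈ Zp := Zp.add_mem huhZp hulocZp
  -- orthogonality: a (u - uhp) d = 0 for d ∈ Zp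
  have horth : ∀ d ∈ Zp, a (u - uhp) d = 0 := by
    intro d hd
    rw [hsub1, hu d, hgalp d hd]
    ring
  -- Galerkin optimality vs w := uh + uloc
  set w := uh + uloc with hw
  have hdZp : uhp - w ∈ Zp := Zp.sub_mem huhpZ hwZp
  have hexp : a (u - w) (u - w)
      = a (u - uhp) (u - uhp) + 2 * a (u - uhp) (uhp - w) + a (uhp - w) (uhp - w) := by
    have h1 : u - w = (u - uhp) + (uhp - w) := by abel
    rw [h1, hadd1, (hbilin₂ (u - uhp)).map_add, (hbilin₂ (uhp - w)).map_add,
      hsymm (uhp - w) (u - uhp)]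
    ring
  have hopt : a (u - uhp) (u - uhp) ≤ a (u - w) (u - w) := by
    rw [hexp, horth _ hdZp]
    nlinarith [hnn (uhp - w)]
  -- expand the error at w
  have hloc : a (u - uh) uloc = a uloc uloc := by
    rw [hsub1, hu uloc]
    have := hres uloc hulocmem
    linarith
  have hexpand : ∀ p q : X, a (p - q) (p - q) = a p p - 2 * a p q + a q q := by
    intro p q
    rw [hsub1, hsub2, hsub2, hsymm q p]
    ring
  have hexp2 : a (u - w) (u - w) = a (u - uh) (u - uh) - a uloc uloc := by
    have h1 : u - w = (u - uh) - uloc := by rw [hw]; abel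
    rw [h1, hexpand, hloc]
    ring
  have : r ^ 2 = a uloc uloc := by
    rw [hrval, Real.sq_sqrt (hnn uloc)]
  rw [this]
  calc a (u - uhp) (u - uhp) ≤ a (u - w) (u - w) := hopt
    _ = a (u - uh) (u - uh) - a uloc uloc := hexp2
end

section
/- Consider a Hilbert space X with symmetric coercive form a, exact solution u of a(u,·) = f, and closed local subspaces X_{1,0},…,X_{N,0} ⊂ X. Suppose there is a constant c_pu > 0 such that for every w ∈ X (in the Galerkin trial space), ‖f − a(w,·)‖_{X'} ≤ c_pu √(Σ_{i=1}^N (r^(i)[w])²) where r^(i)[w] = sup_{v∈X_{i,0}} (f(v)−a(w,v))/‖v‖_a. Define the greedy enrichment iteration: given û_ℓ (Galerkin solution in Z_ℓ), select k = argmax_i r^(i)[û_ℓ], compute the local correction u_k ∈ X_{k,0} with a(û_ℓ + u_k, v) = f(v) ∀v∈X_{k,0}, and set Z_{ℓ+1} ⊇ Z_ℓ + span{u_k} with Galerkin solution û_{ℓ+1}. Then ‖u − û_ℓ‖_a ≤ (1 − 1/(N c_pu²))^{ℓ/2} ‖u − û_0‖_a for all ℓ ≥ 0. -/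
/-- Exponential convergence of the greedy local enrichment algorithm for a symmetric
coercive problem: `‖u − û_ℓ‖_a ≤ (1 − 1/(N c_pu²))^{ℓ/2} ‖u − û_0‖_a`. -/
theorem greedy_enrichment_exponential_convergence
    {X : Type*} [NormedAddCommGroup X] [InnerProductSpace ℝ X] [CompleteSpace X]
    (a : X → X → ℝ)
    (hbilin₁ : ∀ v, IsLinearMap ℝ (fun w => a w v))
    (hbilin₂ : ∀ w, IsLinearMap ℝ (a w))
    (hsymm : ∀ w v, a w v = a v w)
    (c₀ : ℝ) (hc₀ : 0 < c₀) (hcoer : ∀ w, c₀ * ‖w‖ ^ 2 ≤ a w w)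
    (Ca : ℝ) (hcont : ∀ w v, |a w v| ≤ Ca * ‖w‖ * ‖v‖)
    (f : X →L[ℝ] ℝ)
    (u : X) (hu : ∀ v, a u v = f v)
    (N : ℕ) (hNpos : 0 < N)
    (Xloc : Fin N → Submodule ℝ X) (hXloc : ∀ i, IsClosed ((Xloc i : Set X)))
    (resid : X → Fin N → ℝ)
    (hresid : ∀ w i, resid w i
      = ⨆ v : Xloc i, (f (v : X) - a w (v : X)) / Real.sqrt (a (v : X) (v : X)))
    (cpu : ℝ) (hcpu : 0 < cpu)
    -- the partition-of-unity residual bound on the global dual residual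
    (hglobal : ∀ w : X,
      (⨆ v : {v : X // v ≠ 0}, (f (v : X) - a w (v : X)) / Real.sqrt (a (v : X) (v : X)))
        ≤ cpu * Real.sqrt (∑ i, (resid w i) ^ 2))
    (Z : ℕ → Submodule ℝ X) (hZ : ∀ ℓ, IsClosed ((Z ℓ : Set X)))
    (uh : ℕ → X) (huhZ : ∀ ℓ, uh ℓ ∈ Z ℓ)
    (hgal : ∀ ℓ, ∀ v ∈ Z ℓ, a (uh ℓ) v = f v)
    (k : ℕ → Fin N)
    (hk : ∀ ℓ i, resid (uh ℓ) i ≤ resid (uh ℓ) (k ℓ))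
    (uloc : ℕ → X) (hulocmem : ∀ ℓ, uloc ℓ ∈ Xloc (k ℓ))
    (huloc : ∀ ℓ, ∀ v ∈ Xloc (k ℓ), a (uh ℓ + uloc ℓ) v = f v)
    (hnest : ∀ ℓ, Z ℓ ⊔ Submodule.span ℝ {uloc ℓ} ≤ Z (ℓ + 1)) :
    ∀ ℓ : ℕ, Real.sqrt (a (u - uh ℓ) (u - uh ℓ))
      ≤ (1 - 1 / ((N : ℝ) * cpu ^ 2)) ^ ((ℓ : ℝ) / 2)
          * Real.sqrt (a (u - uh 0) (u - uh 0)) := by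
  classical
  -- bilinearity helpers
  have hsub₁ : ∀ w w' v, a (w - w') v = a w v - a w' v := fun w w' v =>
    (hbilin₁ v).map_sub w w'
  have hadd₁ : ∀ w w' v, a (w + w') v = a w v + a w' v := fun w w' v =>
    (hbilin₁ v).map_add w w'
  have hsub₂ : ∀ w v v', a w (v - v') = a w v - a w v' := fun w v v' =>
    (hbilin₂ w).map_sub v v'
  have hsmul₁ : ∀ (t : ℝ) w v, a (t • w) v = t * a w v := fun t w v =>
    (hbilin₁ v).map_smul t w
  have hsmul₂ : ∀ (t : ℝ) w v, a w (t • v) = t * a w v := fun t w v =>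
    (hbilin₂ w).map_smul t v
  have hzero₂ : ∀ w, a w 0 = 0 := fun w => (hbilin₂ w).map_zero
  have hzero₁ : ∀ v, a 0 v = 0 := fun v => (hbilin₁ v).map_zero
  have hpos : ∀ w, 0 ≤ a w w := fun w => le_trans (by positivity) (hcoer w)
  have hzeroeq : ∀ w, a w w = 0 → w = 0 := by
    intro w hw
    have h1 : c₀ * ‖w‖ ^ 2 ≤ 0 := hw ▸ hcoer w
    have h2 : ‖w‖ ^ 2 ≤ 0 := by nlinarith
    have h3 : ‖w‖ ^ 2 = 0 := le_antisymm h2 (sq_nonneg _)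
    have h4 : ‖w‖ = 0 := pow_eq_zero_iff two_ne_zero |>.mp h3
    exact norm_eq_zero.mp h4
  -- Cauchy-Schwarz for a
  have hCS : ∀ e v, a e v ≤ Real.sqrt (a e e) * Real.sqrt (a v v) := by
    intro e v
    by_cases hv : a v v = 0
    · have : v = 0 := hzeroeq v hv
      rw [this, hzero₂]
      positivity
    · have hC : 0 < a v v := lt_of_le_of_ne (hpos v) (Ne.symm hv)
      have hexp : a (a v v • e - a e v • v) (a v v • e - a e v • v)
          = a v v * (a v v * a e e) - a v v * (a e v * a e v) := by
        simp only [hsub₁, hsub₂, hsmul₁, hsmul₂]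
        rw [hsymm v e]
        ring
      have h0 := hpos (a v v • e - a e v • v)
      rw [hexp] at h0
      have hsq : (a e v) ^ 2 ≤ a e e * a v v := by nlinarith
      calc a e v ≤ |a e v| := le_abs_self _
        _ = Real.sqrt ((a e v) ^ 2) := (Real.sqrt_sq_eq_abs _).symm
        _ ≤ Real.sqrt (a e e * a v v) := Real.sqrt_le_sqrt hsq
        _ = Real.sqrt (a e e) * Real.sqrt (a v v) := Real.sqrt_mul (hpos e) _
  have hratio : ∀ e v, a e v / Real.sqrt (a v v) ≤ Real.sqrt (a e e) := by
    intro e v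
    by_cases hv : a v v = 0
    · rw [hv, Real.sqrt_zero, div_zero]; exact Real.sqrt_nonneg _
    · have hC : 0 < a v v := lt_of_le_of_ne (hpos v) (Ne.symm hv)
      rw [div_le_iff₀ (Real.sqrt_pos.mpr hC)]
      exact hCS e v
  -- f v - a w v = a (u - w) v
  have hfa : ∀ w v, f v - a w v = a (u - w) v := by
    intro w v; rw [hsub₁, hu]
  -- Galerkin orthogonality
  have horth : ∀ ℓ, ∀ v ∈ Z ℓ, a (u - uh ℓ) v = 0 := by
    intro ℓ v hv; rw [hsub₁, hu, hgal ℓ v hv]; ring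
  -- residual bounds
  have hbdd : ∀ w i, BddAbove (Set.range fun v : Xloc i =>
      (f (v : X) - a w (v : X)) / Real.sqrt (a (v : X) (v : X))) := by
    intro w i
    refine ⟨Real.sqrt (a (u - w) (u - w)), ?_⟩
    rintro x ⟨v, rfl⟩
    simp only [hfa]
    exact hratio _ _
  have hresle : ∀ w i, resid w i ≤ Real.sqrt (a (u - w) (u - w)) := by
    intro w i
    rw [hresid]
    exact ciSup_le fun v => by simp only [hfa]; exact hratio _ _
  have hresnn : ∀ w i, 0 ≤ resid w i := by
    intro w i
    rw [hresid]
    have h0 : ((f ((0 : Xloc i) : X) - a w ((0 : Xloc i) : X))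
        / Real.sqrt (a ((0 : Xloc i) : X) ((0 : Xloc i) : X))) = 0 := by
      simp [hzero₂]
    calc (0:ℝ) = _ := h0.symm
      _ ≤ _ := le_ciSup (hbdd w i) (0 : Xloc i)
  -- lower bound: energy norm ≤ cpu * sqrt of residual sum
  have hEle : ∀ ℓ, Real.sqrt (a (u - uh ℓ) (u - uh ℓ))
      ≤ cpu * Real.sqrt (∑ i, (resid (uh ℓ) i) ^ 2) := by
    intro ℓ
    by_cases hE : a (u - uh ℓ) (u - uh ℓ) = 0
    · rw [hE, Real.sqrt_zero]
      positivity
    · set e := u - uh ℓ with he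
      have hne : e ≠ 0 := fun h => hE (by rw [h, hzero₁])
      have hbddg : BddAbove (Set.range fun v : {v : X // v ≠ 0} =>
          (f (v : X) - a (uh ℓ) (v : X)) / Real.sqrt (a (v : X) (v : X))) := by
        refine ⟨Real.sqrt (a e e), ?_⟩
        rintro x ⟨v, rfl⟩
        simp only [hfa]
        exact hratio _ _
      have hle1 : Real.sqrt (a e e)
          ≤ ⨆ v : {v : X // v ≠ 0}, (f (v : X) - a (uh ℓ) (v : X))
              / Real.sqrt (a (v : X) (v : X)) := by
        have := le_ciSup hbddg (⟨e, hne⟩ : {v : X // v ≠ 0})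
        calc Real.sqrt (a e e) = a e e / Real.sqrt (a e e) := (Real.div_sqrt).symm
          _ = (f e - a (uh ℓ) e) / Real.sqrt (a e e) := by rw [hfa]
          _ ≤ _ := this
      exact hle1.trans (hglobal (uh ℓ))
  have hNC : (0:ℝ) < (N : ℝ) * cpu ^ 2 := by
    have : (0:ℝ) < (N : ℝ) := Nat.cast_pos.mpr hNpos
    positivity
  -- energy bounded via maximal residual
  have hEr : ∀ ℓ, a (u - uh ℓ) (u - uh ℓ)
      ≤ (N : ℝ) * cpu ^ 2 * (resid (uh ℓ) (k ℓ)) ^ 2 := by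
    intro ℓ
    set r := resid (uh ℓ) (k ℓ) with hr
    have hrnn : 0 ≤ r := hresnn _ _
    have hsum : (∑ i, (resid (uh ℓ) i) ^ 2) ≤ (N:ℝ) * r ^ 2 := by
      calc (∑ i, (resid (uh ℓ) i) ^ 2) ≤ ∑ _i : Fin N, r ^ 2 :=
            Finset.sum_le_sum fun i _ =>
              pow_le_pow_left₀ (hresnn _ _) (hk ℓ i) 2
        _ = (N:ℝ) * r ^ 2 := by simp [Finset.sum_const, mul_comm]
    have h1 : Real.sqrt (a (u - uh ℓ) (u - uh ℓ))
        ≤ cpu * Real.sqrt ((N:ℝ) * r ^ 2) :=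
      (hEle ℓ).trans (by
        have := Real.sqrt_le_sqrt hsum
        nlinarith [this, Real.sqrt_nonneg (∑ i, (resid (uh ℓ) i) ^ 2)])
    have h2 : Real.sqrt ((N:ℝ) * r ^ 2) = Real.sqrt (N:ℝ) * r := by
      rw [Real.sqrt_mul (by positivity), Real.sqrt_sq hrnn]
    rw [h2] at h1
    have h3 := Real.sq_sqrt (hpos (u - uh ℓ))
    have h4 := Real.sq_sqrt (show (0:ℝ) ≤ (N:ℝ) by positivity)
    calc a (u - uh ℓ) (u - uh ℓ)
        = Real.sqrt (a (u - uh ℓ) (u - uh ℓ)) ^ 2 := h3.symm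
      _ ≤ (cpu * (Real.sqrt (N:ℝ) * r)) ^ 2 :=
          pow_le_pow_left₀ (Real.sqrt_nonneg _) h1 2
      _ = cpu ^ 2 * (Real.sqrt (N:ℝ) ^ 2 * r ^ 2) := by ring
      _ = cpu ^ 2 * ((N:ℝ) * r ^ 2) := by rw [h4]
      _ = (N : ℝ) * cpu ^ 2 * r ^ 2 := by ring
  -- one-step contraction
  have hstep : ∀ ℓ, a (u - uh (ℓ+1)) (u - uh (ℓ+1))
      ≤ (1 - 1 / ((N : ℝ) * cpu ^ 2)) * a (u - uh ℓ) (u - uh ℓ) := by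
    intro ℓ
    set e := u - uh ℓ with he
    set d := uloc ℓ with hd
    set r := resid (uh ℓ) (k ℓ) with hr
    have hrnn : 0 ≤ r := hresnn _ _
    -- local orthogonality: a (e - d) v = 0 for v in Xloc (k ℓ)
    have hlorth : ∀ v ∈ Xloc (k ℓ), a (e - d) v = 0 := by
      intro v hv
      have : e - d = u - (uh ℓ + d) := by rw [he]; abel
      rw [this, hsub₁, hu, huloc ℓ v hv]
      ring
    -- r ≤ sqrt (a d d)
    have h2 : r ≤ Real.sqrt (a d d) := by
      rw [hr, hresid]
      refine ciSup_le fun v => ?_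
      have hev : a e (v:X) = a d (v:X) := by
        have := hlorth (v:X) v.2
        rw [hsub₁] at this
        linarith
      simp only [hfa]
      calc a (u - uh ℓ) (v:X) / Real.sqrt (a (v:X) (v:X))
          = a d (v:X) / Real.sqrt (a (v:X) (v:X)) := by rw [← he, hev]
        _ ≤ Real.sqrt (a d d) := hratio _ _
    have hr2 : r ^ 2 ≤ a d d := by
      have := Real.sq_sqrt (hpos d)
      nlinarith [Real.sqrt_nonneg (a d d)]
    -- best approximation: E(ℓ+1) ≤ a (e - d) (e - d)
    have hw : uh ℓ + d ∈ Z (ℓ+1) := by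
      apply hnest ℓ
      exact Submodule.add_mem _ (Submodule.mem_sup_left (huhZ ℓ))
        (Submodule.mem_sup_right (Submodule.mem_span_singleton_self _))
    have hz : uh (ℓ+1) - (uh ℓ + d) ∈ Z (ℓ+1) :=
      Submodule.sub_mem _ (huhZ (ℓ+1)) hw
    have hexp1 : u - (uh ℓ + d) = (u - uh (ℓ+1)) + (uh (ℓ+1) - (uh ℓ + d)) := by abel
    have hgz : a (u - uh (ℓ+1)) (uh (ℓ+1) - (uh ℓ + d)) = 0 :=
      horth (ℓ+1) _ hz
    have hbest : a (u - uh (ℓ+1)) (u - uh (ℓ+1)) ≤ a (e - d) (e - d) := by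
      have hed : e - d = u - (uh ℓ + d) := by rw [he]; abel
      rw [hed, hexp1]
      set g := u - uh (ℓ+1)
      set z := uh (ℓ+1) - (uh ℓ + d)
      have : a (g + z) (g + z) = a g g + 2 * a g z + a z z := by
        rw [hadd₁]
        have h1 := (hbilin₂ g).map_add g z
        have h2 := (hbilin₂ z).map_add g z
        rw [h1, h2, hsymm z g]
        ring
      rw [this, hgz]
      nlinarith [hpos z]
    -- expand a (e-d) (e-d) = a e e - a d d
    have haed : a e d = a d d := by
      have := hlorth d (hulocmem ℓ)
      rw [hsub₁] at this
      linarith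
    have hexpgen : ∀ p q : X, a (p - q) (p - q) = a p p - 2 * a p q + a q q := by
      intro p q
      simp only [hsub₁, hsub₂]
      rw [hsymm q p]
      ring
    have hexp2 : a (e - d) (e - d) = a e e - a d d := by
      rw [hexpgen e d, haed]
      ring
    have hEr' : a e e ≤ (N : ℝ) * cpu ^ 2 * r ^ 2 := hEr ℓ
    have hdiv : a e e / ((N : ℝ) * cpu ^ 2) ≤ r ^ 2 :=
      (div_le_iff₀ hNC).mpr (by linarith [hEr'])
    have : a (u - uh (ℓ+1)) (u - uh (ℓ+1)) ≤ a e e - r ^ 2 := by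
      rw [hexp2] at hbest
      linarith
    have hfinal : (1 - 1 / ((N : ℝ) * cpu ^ 2)) * a e e
        = a e e - a e e / ((N : ℝ) * cpu ^ 2) := by ring
    rw [← he] at *
    rw [hfinal]
    linarith
  -- conclude
  intro ℓ
  by_cases hE0 : a (u - uh 0) (u - uh 0) = 0
  · have hall : ∀ m, a (u - uh m) (u - uh m) = 0 := by
      intro m
      induction m with
      | zero => exact hE0
      | succ n ih =>
        have h1 := hstep n
        rw [ih, mul_zero] at h1
        exact le_antisymm h1 (hpos _)
    rw [hall ℓ, hE0, Real.sqrt_zero, mul_zero]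
  · have hE0pos : 0 < a (u - uh 0) (u - uh 0) :=
      lt_of_le_of_ne (hpos _) (Ne.symm hE0)
    -- 1 ≤ N cpu²
    have hone : (1:ℝ) ≤ (N : ℝ) * cpu ^ 2 := by
      have h1 := hEr 0
      have h2 : (resid (uh 0) (k 0)) ^ 2 ≤ a (u - uh 0) (u - uh 0) := by
        have := hresle (uh 0) (k 0)
        have h3 := Real.sq_sqrt (hpos (u - uh 0))
        nlinarith [hresnn (uh 0) (k 0), Real.sqrt_nonneg (a (u - uh 0) (u - uh 0))]
      nlinarith
    set q : ℝ := 1 - 1 / ((N : ℝ) * cpu ^ 2) with hqdef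
    have hq0 : 0 ≤ q := by
      have : 1 / ((N : ℝ) * cpu ^ 2) ≤ 1 := by
        rw [div_le_one hNC]; exact hone
      rw [hqdef]; linarith
    have hEn : ∀ m, a (u - uh m) (u - uh m) ≤ q ^ m * a (u - uh 0) (u - uh 0) := by
      intro m
      induction m with
      | zero => simp
      | succ n ih =>
        calc a (u - uh (n+1)) (u - uh (n+1)) ≤ q * a (u - uh n) (u - uh n) := hstep n
          _ ≤ q * (q ^ n * a (u - uh 0) (u - uh 0)) := by
              exact mul_le_mul_of_nonneg_left ih hq0
          _ = q ^ (n+1) * a (u - uh 0) (u - uh 0) := by ring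
    have hsq : Real.sqrt (q ^ ℓ * a (u - uh 0) (u - uh 0))
        = q ^ ((ℓ:ℝ)/2) * Real.sqrt (a (u - uh 0) (u - uh 0)) := by
      rw [Real.sqrt_mul (by positivity)]
      congr 1
      rw [Real.sqrt_eq_rpow, ← Real.rpow_natCast q ℓ, ← Real.rpow_mul hq0]
      ring_nf
    calc Real.sqrt (a (u - uh ℓ) (u - uh ℓ))
        ≤ Real.sqrt (q ^ ℓ * a (u - uh 0) (u - uh 0)) := Real.sqrt_le_sqrt (hEn ℓ)
      _ = q ^ ((ℓ:ℝ)/2) * Real.sqrt (a (u - uh 0) (u - uh 0)) := hsq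
end

section
/- Let X be a finite-dimensional normed space equipped with two norms |·|_{1} and |·|_{1,p}, β > 0, L > 0, c_h = sup_{v∈X, v≠0} |v|_{1,p}/|v|_{1}, and let G : X → X' be continuously differentiable with inf-sup constant β for G'(û) (with respect to |·|₁), and Lipschitz derivative ‖G'(û) − G'(w)‖ ≤ L |û − w|_{1,p} for w in a ball B(û, R). Set τ = (2 L c_h / β²) ‖G(û)‖_{X'}. If τ < 1 and R ≥ β/(L c_h), then there exists a unique u ∈ B(û, β/(L c_h)) with G(u) = 0, and |û − u|₁ ≤ (β/(L c_h)) (1 − √(1 − τ)). -/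
set_option maxHeartbeats 1600000000 in
/-- Brezzi–Rappaz–Raviart a posteriori error bound: if the proximity indicator
`τ = (2 L c_h / β²) ‖G(û)‖_{X'} < 1`, then there is a unique zero `u` of `G` in the ball
of radius `β/(L c_h)` around `û`, and `|û − u|₁ ≤ (β/(L c_h)) (1 − √(1 − τ))`. -/
theorem brezzi_rappaz_raviart
    {X : Type*} [NormedAddCommGroup X] [NormedSpace ℝ X]
    [FiniteDimensional ℝ X] [Nontrivial X]
    (np : X → ℝ)
    (G : X → X →L[ℝ] ℝ) (hG : ContDiff ℝ 1 G)
    (uh : X) (β L ch R : ℝ)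
    (hβ : 0 < β) (hL : 0 < L) (hch : 0 < ch)
    (hchdef : ch = ⨆ v : {v : X // v ≠ 0}, np (v : X) / ‖(v : X)‖)
    (hinfsup : ∀ w : X, β * ‖w‖ ≤ ‖fderiv ℝ G uh w‖)
    (hLip : ∀ w : X, ‖uh - w‖ ≤ R → ‖fderiv ℝ G uh - fderiv ℝ G w‖ ≤ L * np (uh - w))
    (τ : ℝ) (hτdef : τ = (2 * L * ch / β ^ 2) * ‖G uh‖)
    (hτ : τ < 1) (hR : β / (L * ch) ≤ R) :
    ∃ u : X, (G u = 0 ∧ ‖u - uh‖ ≤ β / (L * ch)) ∧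
      (∀ u' : X, G u' = 0 → ‖u' - uh‖ ≤ β / (L * ch) → u' = u) ∧
      ‖uh - u‖ ≤ (β / (L * ch)) * (1 - Real.sqrt (1 - τ)) := by
  classical
  set A : X →L[ℝ] (X →L[ℝ] ℝ) := fderiv ℝ G uh with hA
  -- the norm-comparison constant
  have hnp : ∀ x : X, x ≠ 0 → np x ≤ ch * ‖x‖ := by
    intro x hx
    have hb : BddAbove (Set.range fun v : {v : X // v ≠ 0} => np (v : X) / ‖(v : X)‖) := by
      by_contra h
      rw [Real.iSup_of_not_bddAbove h] at hchdef
      exact hch.ne' hchdef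
    have hle : np x / ‖x‖ ≤ ch := by
      rw [hchdef]
      exact le_ciSup hb ⟨x, hx⟩
    have hx0 : (0 : ℝ) < ‖x‖ := norm_pos_iff.mpr hx
    calc np x = np x / ‖x‖ * ‖x‖ := by field_simp
      _ ≤ ch * ‖x‖ := mul_le_mul_of_nonneg_right hle hx0.le
  have hLip2 : ∀ z : X, ‖uh - z‖ ≤ R → ‖A - fderiv ℝ G z‖ ≤ L * ch * ‖uh - z‖ := by
    intro z hz
    by_cases h : uh = z
    · subst h
      have h0 : A - fderiv ℝ G uh = 0 := sub_eq_zero.mpr hA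
      rw [h0, sub_self, norm_zero, mul_zero]
      exact le_of_eq ContinuousLinearMap.opNorm_zero
    · calc ‖A - fderiv ℝ G z‖ ≤ L * np (uh - z) := hLip z hz
        _ ≤ L * (ch * ‖uh - z‖) :=
            mul_le_mul_of_nonneg_left (hnp (uh - z) (sub_ne_zero.mpr h)) hL.le
        _ = L * ch * ‖uh - z‖ := by ring
  -- invertibility of A
  have hinj : Function.Injective A := by
    intro x y hxy
    have h1 := hinfsup (x - y)
    have h2 : A (x - y) = 0 := by rw [map_sub, hxy, sub_self]
    rw [h2, norm_zero] at h1
    have : ‖x - y‖ ≤ 0 := nonpos_of_mul_nonpos_right (by linarith) hβ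
    exact sub_eq_zero.mp (norm_le_zero_iff.mp this)
  have hfr : Module.finrank ℝ X = Module.finrank ℝ (X →L[ℝ] ℝ) := by
    rw [← LinearEquiv.finrank_eq
      (LinearMap.toContinuousLinearMap : (X →ₗ[ℝ] ℝ) ≃ₗ[ℝ] (X →L[ℝ] ℝ)),
      Module.finrank_linearMap_self]
  let e : X ≃L[ℝ] (X →L[ℝ] ℝ) :=
    (LinearMap.linearEquivOfInjective (A : X →ₗ[ℝ] (X →L[ℝ] ℝ)) hinj hfr).toContinuousLinearEquiv
  have he : ∀ x : X, e x = A x := fun x => rfl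
  have hek : ∀ x : X, e.symm (A x) = x := by
    intro x
    rw [← he]; exact e.symm_apply_apply x
  have hinv : ∀ y : X →L[ℝ] ℝ, ‖e.symm y‖ ≤ ‖y‖ / β := by
    intro y
    have h1 := hinfsup (e.symm y)
    have h2 : A (e.symm y) = y := by rw [← he]; exact e.apply_symm_apply y
    rw [h2] at h1
    rw [le_div_iff₀ hβ]
    linarith
  clear_value A e
  -- constants
  have hτ0 : 0 ≤ τ := by rw [hτdef]; positivity
  set q := Real.sqrt (1 - τ) with hq
  have hq0 : 0 < q := Real.sqrt_pos.mpr (by linarith)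
  have hq1 : q ≤ 1 := Real.sqrt_le_one.mpr (by linarith)
  set s := 1 - q with hs
  have hs0 : 0 ≤ s := by rw [hs]; linarith
  have hs1 : s < 1 := by rw [hs]; linarith
  have hsq : s ^ 2 = 2 * s - τ := by
    have h1 : q ^ 2 = 1 - τ := Real.sq_sqrt (by linarith)
    rw [hs]
    linear_combination h1
  clear_value q s
  set ρ := β / (L * ch) with hρ
  have hρ0 : 0 < ρ := by positivity
  set r := ρ * s with hr
  have hr0 : 0 ≤ r := by positivity
  clear_value ρ r
  have hrρ : r ≤ ρ := by nlinarith
  have hrR : r ≤ ρ := hrρ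
  have hρR : ρ ≤ R := hR
  have hR0 : 0 ≤ R := le_trans hρ0.le hρR
  have hGuh : 2 * L * ch * ‖G uh‖ = τ * β ^ 2 := by
    rw [hτdef]; field_simp
  -- key Taylor-type estimate
  have key : ∀ (v w : X) (a b : ℝ), 0 ≤ a → ‖uh - w‖ ≤ a → ‖uh - v‖ ≤ b → a ≤ R → b ≤ R →
      ‖G v - G w - A (v - w)‖ ≤ L * ch * ((a + b) / 2) * ‖v - w‖ := by
    intro v w a b ha hw hv haR hbR
    set d := v - w with hd
    have hdiff : Differentiable ℝ G := hG.differentiable one_ne_zero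
    have hline : ∀ t : ℝ, HasDerivAt (fun t : ℝ => w + t • d) d t := by
      intro t
      simpa using ((hasDerivAt_id t).smul_const d).const_add w
    have hder : ∀ t : ℝ, HasDerivAt (fun t : ℝ => G (w + t • d))
        ((fderiv ℝ G (w + t • d)) d) t := fun t =>
      ((hdiff (w + t • d)).hasFDerivAt.comp_hasDerivAt t (hline t))
    have hcont : Continuous fun t : ℝ => (fderiv ℝ G (w + t • d)) d :=
      ((hG.continuous_fderiv one_ne_zero).comp (by continuity)).clm_apply continuous_const
    have hFTC : (∫ t in (0:ℝ)..1, (fderiv ℝ G (w + t • d)) d) = G v - G w := by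
      rw [intervalIntegral.integral_eq_sub_of_hasDerivAt (fun t _ => hder t)
        (hcont.intervalIntegrable 0 1)]
      simp [hd]
    have hsplit : G v - G w - A d = ∫ t in (0:ℝ)..1, ((fderiv ℝ G (w + t • d)) d - A d) := by
      rw [intervalIntegral.integral_sub (hcont.intervalIntegrable 0 1)
        intervalIntegrable_const, intervalIntegral.integral_const, hFTC]
      simp
    have hbound : ∀ t ∈ Set.Icc (0:ℝ) 1,
        ‖(fderiv ℝ G (w + t • d)) d - A d‖ ≤ L * ch * ((1 - t) * a + t * b) * ‖d‖ := by
      intro t ht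
      have hzdef : uh - (w + t • d) = (1 - t) • (uh - w) + t • (uh - v) := by
        rw [hd]; module
      have hz : ‖uh - (w + t • d)‖ ≤ (1 - t) * a + t * b := by
        rw [hzdef]
        calc ‖(1 - t) • (uh - w) + t • (uh - v)‖
            ≤ ‖(1 - t) • (uh - w)‖ + ‖t • (uh - v)‖ := norm_add_le _ _
          _ ≤ (1 - t) * a + t * b := by
              rw [norm_smul, norm_smul, Real.norm_eq_abs, Real.norm_eq_abs,
                abs_of_nonneg (by linarith [ht.2]), abs_of_nonneg ht.1]
              exact add_le_add (mul_le_mul_of_nonneg_left hw (by linarith [ht.2]))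
                (mul_le_mul_of_nonneg_left hv ht.1)
      have hzR : ‖uh - (w + t • d)‖ ≤ R := le_trans hz (by nlinarith [ht.1, ht.2])
      have h3 := hLip2 (w + t • d) hzR
      calc ‖(fderiv ℝ G (w + t • d)) d - A d‖
          = ‖(A - fderiv ℝ G (w + t • d)) d‖ := by
            rw [ContinuousLinearMap.sub_apply, norm_sub_rev]
        _ ≤ ‖A - fderiv ℝ G (w + t • d)‖ * ‖d‖ := ContinuousLinearMap.le_opNorm _ _
        _ ≤ L * ch * ((1 - t) * a + t * b) * ‖d‖ := by
            apply mul_le_mul_of_nonneg_right _ (norm_nonneg d)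
            calc ‖A - fderiv ℝ G (w + t • d)‖ ≤ L * ch * ‖uh - (w + t • d)‖ := h3
              _ ≤ L * ch * ((1 - t) * a + t * b) :=
                  mul_le_mul_of_nonneg_left hz (by positivity)
    have hgcont : Continuous fun t : ℝ => L * ch * ((1 - t) * a + t * b) * ‖d‖ := by continuity
    have hnormcont : Continuous fun t : ℝ => ‖(fderiv ℝ G (w + t • d)) d - A d‖ :=
      (hcont.sub continuous_const).norm
    rw [hsplit]
    calc ‖∫ t in (0:ℝ)..1, ((fderiv ℝ G (w + t • d)) d - A d)‖
        ≤ ∫ t in (0:ℝ)..1, ‖(fderiv ℝ G (w + t • d)) d - A d‖ :=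
          intervalIntegral.norm_integral_le_integral_norm zero_le_one
      _ ≤ ∫ t in (0:ℝ)..1, L * ch * ((1 - t) * a + t * b) * ‖d‖ := by
          apply intervalIntegral.integral_mono_on zero_le_one
            (hnormcont.intervalIntegrable 0 1) (hgcont.intervalIntegrable 0 1) hbound
      _ = L * ch * ((a + b) / 2) * ‖d‖ := by
          have hfun : (fun t : ℝ => L * ch * ((1 - t) * a + t * b) * ‖d‖)
              = fun t : ℝ => L * ch * a * ‖d‖ + (L * ch * (b - a) * ‖d‖) * t := by
            funext t; ring
          rw [hfun, intervalIntegral.integral_add (g := fun t : ℝ => L * ch * (b - a) * ‖d‖ * t) intervalIntegrable_const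
            ((continuous_const.mul (continuous_id' : Continuous fun t : ℝ => t)).intervalIntegrable 0 1),
            intervalIntegral.integral_const, intervalIntegral.integral_const_mul,
            integral_id]
          norm_num
          ring
  -- the Newton-type map
  set Φ : X → X := fun v => v - e.symm (G v) with hΦ
  have hΦsub : ∀ v : X, Φ v - uh = e.symm (A (v - uh) - G v) := by
    intro v
    rw [map_sub, hek]
    simp only [hΦ]
    abel
  clear_value Φ
  have hself : ∀ v : X, ‖v - uh‖ ≤ r → ‖Φ v - uh‖ ≤ r := by
    intro v hv
    have h1 : A (v - uh) - G v = -(G v - G uh - A (v - uh)) - G uh := by abel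
    have h2 : ‖G v - G uh - A (v - uh)‖ ≤ L * ch * ((0 + r) / 2) * ‖v - uh‖ := by
      apply key v uh 0 r le_rfl (by simp) (by rw [norm_sub_rev]; exact hv)
        hR0 (le_trans hrρ hρR)
    have h3 : ‖A (v - uh) - G v‖ ≤ L * ch * (r / 2) * r + ‖G uh‖ := by
      rw [h1]
      calc ‖-(G v - G uh - A (v - uh)) - G uh‖
          ≤ ‖-(G v - G uh - A (v - uh))‖ + ‖G uh‖ := norm_sub_le _ _
        _ ≤ L * ch * (r / 2) * r + ‖G uh‖ := by
            rw [norm_neg]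
            have : L * ch * ((0 + r) / 2) * ‖v - uh‖ ≤ L * ch * (r / 2) * r := by
              have := mul_le_mul_of_nonneg_left hv (show (0:ℝ) ≤ L * ch * (r / 2) by positivity)
              calc L * ch * ((0 + r) / 2) * ‖v - uh‖ = L * ch * (r / 2) * ‖v - uh‖ := by ring
                _ ≤ L * ch * (r / 2) * r := this
            linarith [h2]
    calc ‖Φ v - uh‖ = ‖e.symm (A (v - uh) - G v)‖ := by rw [hΦsub]
      _ ≤ ‖A (v - uh) - G v‖ / β := hinv _
      _ ≤ (L * ch * (r / 2) * r + ‖G uh‖) / β := div_le_div_of_nonneg_right h3 hβ.le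
      _ ≤ r := by
          have hrdef : L * ch * r = β * s := by
            rw [hr, hρ]; field_simp
          have h9 : (L * ch * r) * (L * ch * r) + τ * β ^ 2 = 2 * β * (L * ch * r) := by
            rw [hrdef]; linear_combination β ^ 2 * hsq
          have heq : L * ch * (r / 2) * r + ‖G uh‖ = r * β :=
            mul_left_cancel₀ (show (2 * L * ch : ℝ) ≠ 0 by positivity)
              (by linear_combination h9 + hGuh)
          rw [div_le_iff₀ hβ]
          exact le_of_eq heq
  have hcontr : ∀ v w_1 : X, ‖v - uh‖ ≤ r → ‖w_1 - uh‖ ≤ r →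
      ‖Φ v - Φ w_1‖ ≤ s * ‖v - w_1‖ := by
    intro v w hv hw
    have h1 : Φ v - Φ w = e.symm (A (v - w) - (G v - G w)) := by
      have hv1 := hΦsub v
      have hw1 := hΦsub w
      have h2 : Φ v - Φ w = (Φ v - uh) - (Φ w - uh) := by abel
      have h3 : A (v - uh) - G v - (A (w - uh) - G w) = A (v - w) - (G v - G w) := by
        rw [map_sub A v w, map_sub A v uh, map_sub A w uh]; abel
      rw [h2, hv1, hw1, ← map_sub, h3]
    have h2 : ‖G v - G w - A (v - w)‖ ≤ L * ch * ((r + r) / 2) * ‖v - w‖ :=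
      key v w r r hr0 (by rw [norm_sub_rev]; exact hw) (by rw [norm_sub_rev]; exact hv)
        (le_trans hrρ hρR) (le_trans hrρ hρR)
    have hrdef : L * ch * r = β * s := by rw [hr, hρ]; field_simp
    calc ‖Φ v - Φ w‖ = ‖e.symm (A (v - w) - (G v - G w))‖ := by rw [h1]
      _ ≤ ‖A (v - w) - (G v - G w)‖ / β := hinv _
      _ ≤ (L * ch * r * ‖v - w‖) / β := by
          apply div_le_div_of_nonneg_right _ hβ.le
          calc ‖A (v - w) - (G v - G w)‖ = ‖G v - G w - A (v - w)‖ := norm_sub_rev _ _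
            _ ≤ L * ch * ((r + r) / 2) * ‖v - w‖ := h2
            _ = L * ch * r * ‖v - w‖ := by ring
      _ = s * ‖v - w‖ := by
          rw [hrdef]; field_simp
  -- fixed point argument on the closed ball
  have hmem_uh : uh ∈ Metric.closedBall uh r := by simp [hr0]
  haveI : Nonempty (Metric.closedBall uh r) := ⟨⟨uh, hmem_uh⟩⟩
  haveI : CompleteSpace (Metric.closedBall uh r) :=
    Metric.isClosed_closedBall.completeSpace_coe
  set F : Metric.closedBall uh r → Metric.closedBall uh r := fun v =>
    ⟨Φ (v : X), by
      rw [Metric.mem_closedBall, dist_eq_norm]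
      exact hself (v : X) (by
        have := v.2
        rw [Metric.mem_closedBall, dist_eq_norm] at this
        exact this)⟩ with hF
  have hFc : ContractingWith ⟨s, hs0⟩ F := by
    constructor
    · exact_mod_cast hs1
    · apply LipschitzWith.of_dist_le_mul
      intro x y
      rw [Subtype.dist_eq, Subtype.dist_eq, dist_eq_norm, dist_eq_norm]
      apply hcontr (x : X) (y : X)
      · have := x.2; rw [Metric.mem_closedBall, dist_eq_norm] at this; exact this
      · have := y.2; rw [Metric.mem_closedBall, dist_eq_norm] at this; exact this
  set u : X := ((ContractingWith.fixedPoint F hFc : Metric.closedBall uh r) : X) with hu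
  have humem : ‖u - uh‖ ≤ r := by
    have := (ContractingWith.fixedPoint F hFc).2
    rw [Metric.mem_closedBall, dist_eq_norm] at this
    exact this
  have hΦu : Φ u = u := by
    have := hFc.fixedPoint_isFixedPt
    have h2 := congrArg (Subtype.val) this
    exact h2
  have hGu : G u = 0 := by
    have h1 : e.symm (G u) = 0 := by
      have : u - e.symm (G u) = u := by
        conv_rhs => rw [← hΦu]
        simp only [hΦ]
      have h2 := congrArg (fun z => u - z) this
      simpa using h2
    have h3 := congrArg e h1
    rw [e.apply_symm_apply] at h3
    simpa using h3
  clear_value u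
  refine ⟨u, ⟨hGu, le_trans humem hrρ⟩, ?_, ?_⟩
  · -- uniqueness
    intro u' hGu' hu'
    have h1 : ‖G u' - G u - A (u' - u)‖ ≤ L * ch * ((r + ρ) / 2) * ‖u' - u‖ := by
      apply key u' u r ρ hr0
      · rw [norm_sub_rev]; exact humem
      · rw [norm_sub_rev]; exact hu'
      · exact le_trans hrρ hρR
      · exact hρR
    have h2 : ‖A (u' - u)‖ ≤ L * ch * ((r + ρ) / 2) * ‖u' - u‖ := by
      calc ‖A (u' - u)‖ = ‖G u' - G u - A (u' - u)‖ := by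
            rw [hGu, hGu']; rw [show (0 : X →L[ℝ] ℝ) - 0 - A (u' - u) = -(A (u' - u)) by abel,
              norm_neg]
        _ ≤ L * ch * ((r + ρ) / 2) * ‖u' - u‖ := h1
    have h3 := hinfsup (u' - u)
    have hLchρ : L * ch * ρ = β := by rw [hρ]; field_simp
    have hLchr : L * ch * r = β * s := by rw [hr, hρ]; field_simp
    have h4 : β * ‖u' - u‖ ≤ (β * s + β) / 2 * ‖u' - u‖ := by
      calc β * ‖u' - u‖ ≤ L * ch * ((r + ρ) / 2) * ‖u' - u‖ := le_trans h3 h2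
        _ = (L * ch * r + L * ch * ρ) / 2 * ‖u' - u‖ := by ring
        _ = (β * s + β) / 2 * ‖u' - u‖ := by rw [hLchρ, hLchr]
    have h5 : ‖u' - u‖ ≤ 0 := by
      by_contra hcon
      push_neg at hcon
      have h1s : (0 : ℝ) < 1 - s := by linarith
      have hp := mul_pos (mul_pos hβ h1s) hcon
      nlinarith [h4, hp]
    have h6 : u' - u = 0 := norm_le_zero_iff.mp h5
    exact sub_eq_zero.mp h6
  · rw [norm_sub_rev]
    linarith [humem, hr, hρ, hs, hq]
end

section
/- Let a_μ be a family of symmetric coercive forms indexed by μ in a finite set P of size n, each satisfying the single-configuration one-step reduction and residual bound with uniform constants N_dd,max and c_pu. Run the multi-configuration greedy enrichment that at step ℓ picks the pair (component, parameter) with maximal local residual and enriches the shared space. Then there exist constants C, α > 0 (depending on n, N_dd,max, c_pu and the initial errors) such that max_{μ∈P} ‖u_μ − û_{ℓ,μ}‖_{a_μ} ≤ C e^{−αℓ} for all ℓ. -/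
/-- Exponential convergence of the multi-configuration greedy enrichment algorithm:
for a finite family of symmetric coercive problems sharing the reduced space, with the
uniform partition-of-unity residual bound, the maximal energy error over the training
set decays exponentially in the iteration count. -/
theorem multi_config_greedy_exponential_convergence
    {X : Type*} [NormedAddCommGroup X] [InnerProductSpace ℝ X] [CompleteSpace X]
    (n : ℕ) (hn : 0 < n)                        -- size of the training set P
    (Ndd : ℕ) (hNdd : 0 < Ndd)                  -- uniform bound on number of components
    (a : Fin n → X → X → ℝ)
    (hbilin₁ : ∀ μ v, IsLinearMap ℝ (fun w => a μ w v))
    (hbilin₂ : ∀ μ w, IsLinearMap ℝ (a μ w))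
    (hsymm : ∀ μ w v, a μ w v = a μ v w)
    (c₀ : Fin n → ℝ) (hc₀ : ∀ μ, 0 < c₀ μ)
    (hcoer : ∀ μ w, c₀ μ * ‖w‖ ^ 2 ≤ a μ w w)
    (Ca : Fin n → ℝ) (hcont : ∀ μ w v, |a μ w v| ≤ Ca μ * ‖w‖ * ‖v‖)
    (f : Fin n → X →L[ℝ] ℝ)
    (u : Fin n → X) (hu : ∀ μ v, a μ (u μ) v = f μ v)
    (Xloc : Fin n → Fin Ndd → Submodule ℝ X)
    (hXloc : ∀ μ i, IsClosed ((Xloc μ i : Set X)))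
    (resid : Fin n → X → Fin Ndd → ℝ)
    (hresid : ∀ μ w i, resid μ w i
      = ⨆ v : Xloc μ i, (f μ (v : X) - a μ w (v : X)) / Real.sqrt (a μ (v : X) (v : X)))
    (cpu : ℝ) (hcpu : 0 < cpu)
    (hglobal : ∀ μ (w : X),
      (⨆ v : {v : X // v ≠ 0},
          (f μ (v : X) - a μ w (v : X)) / Real.sqrt (a μ (v : X) (v : X)))
        ≤ cpu * Real.sqrt (∑ i, (resid μ w i) ^ 2))
    (Z : ℕ → Submodule ℝ X) (hZ : ∀ ℓ, IsClosed ((Z ℓ : Set X)))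
    (uh : ℕ → Fin n → X) (huhZ : ∀ ℓ μ, uh ℓ μ ∈ Z ℓ)
    (hgal : ∀ ℓ μ, ∀ v ∈ Z ℓ, a μ (uh ℓ μ) v = f μ v)
    (m : ℕ → Fin n) (k : ℕ → Fin Ndd)
    -- greedy selection of the pair (parameter, component) with maximal local residual
    (hmax : ∀ ℓ μ i, resid μ (uh ℓ μ) i ≤ resid (m ℓ) (uh ℓ (m ℓ)) (k ℓ))
    (uloc : ℕ → X) (hulocmem : ∀ ℓ, uloc ℓ ∈ Xloc (m ℓ) (k ℓ))
    (huloc : ∀ ℓ, ∀ v ∈ Xloc (m ℓ) (k ℓ), a (m ℓ) (uh ℓ (m ℓ) + uloc ℓ) v = f (m ℓ) v)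
    (hnest : ∀ ℓ, Z ℓ ⊔ Submodule.span ℝ {uloc ℓ} ≤ Z (ℓ + 1)) :
    ∃ Cc α : ℝ, 0 < Cc ∧ 0 < α ∧
      ∀ ℓ : ℕ, ∀ μ : Fin n,
        Real.sqrt (a μ (u μ - uh ℓ μ) (u μ - uh ℓ μ)) ≤ Cc * Real.exp (-α * ℓ) := by
  -- bilinearity helpers
  have haddL : ∀ μ (x y v : X), a μ (x + y) v = a μ x v + a μ y v :=
    fun μ x y v => (hbilin₁ μ v).map_add x y
  have hsubL : ∀ μ (x y v : X), a μ (x - y) v = a μ x v - a μ y v :=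
    fun μ x y v => (hbilin₁ μ v).map_sub x y
  have hsmulL : ∀ μ (t : ℝ) (x v : X), a μ (t • x) v = t * a μ x v :=
    fun μ t x v => (hbilin₁ μ v).map_smul t x
  have hsubR : ∀ μ (w x y : X), a μ w (x - y) = a μ w x - a μ w y :=
    fun μ w x y => (hbilin₂ μ w).map_sub x y
  have hsmulR : ∀ μ (w : X) (t : ℝ) (x : X), a μ w (t • x) = t * a μ w x :=
    fun μ w t x => (hbilin₂ μ w).map_smul t x
  have hzeroR : ∀ μ (w : X), a μ w 0 = 0 := fun μ w => (hbilin₂ μ w).map_zero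
  -- positivity
  have posd : ∀ μ (w : X), 0 ≤ a μ w w := fun μ w =>
    le_trans (mul_nonneg (hc₀ μ).le (by positivity)) (hcoer μ w)
  have zeroOf : ∀ μ (y : X), a μ y y = 0 → y = 0 := by
    intro μ y h
    have h1 : c₀ μ * ‖y‖ ^ 2 ≤ 0 := h ▸ hcoer μ y
    have h2 : ‖y‖ = 0 := by
      by_contra hne
      have hpos : 0 < ‖y‖ := lt_of_le_of_ne (norm_nonneg y) (Ne.symm hne)
      nlinarith [mul_pos (hc₀ μ) (pow_pos hpos 2)]
    exact norm_eq_zero.mp h2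
  -- Cauchy-Schwarz (squared)
  have CS : ∀ μ (x y : X), (a μ x y) ^ 2 ≤ a μ x x * a μ y y := by
    intro μ x y
    have h0 := posd μ (a μ y y • x - a μ x y • y)
    have e1 : a μ (a μ y y • x - a μ x y • y) (a μ y y • x - a μ x y • y)
        = a μ y y * (a μ y y * a μ x x) - a μ y y * (a μ x y * a μ x y)
          - (a μ x y * (a μ y y * a μ x y) - a μ x y * (a μ x y * a μ y y)) := by
      rw [hsubL, hsmulL, hsmulL, hsubR, hsubR, hsmulR, hsmulR, hsmulR, hsmulR,
        hsymm μ x y, hsymm μ y x]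
      ring
    rw [e1] at h0
    by_cases hy : a μ y y = 0
    · have hy0 : y = 0 := zeroOf μ y hy
      subst hy0
      rw [hzeroR, hzeroR]
      simp
    · have hyy : 0 < a μ y y := lt_of_le_of_ne (posd μ y) (Ne.symm hy)
      nlinarith [h0, hyy]
  have CS' : ∀ μ (x y : X), a μ x y ≤ Real.sqrt (a μ x x) * Real.sqrt (a μ y y) := by
    intro μ x y
    have h1 : a μ x y ≤ |a μ x y| := le_abs_self _
    rw [← Real.sqrt_sq_eq_abs] at h1
    refine h1.trans ?_
    rw [← Real.sqrt_mul (posd μ x)]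
    exact Real.sqrt_le_sqrt (CS μ x y)
  have ratio : ∀ μ (x y : X), a μ x y / Real.sqrt (a μ y y) ≤ Real.sqrt (a μ x x) := by
    intro μ x y
    rcases eq_or_lt_of_le (Real.sqrt_nonneg (a μ y y)) with h | h
    · rw [← h, div_zero]; exact Real.sqrt_nonneg _
    · rw [div_le_iff₀ h]; exact CS' μ x y
  have hnum : ∀ ℓ μ (v : X), f μ v - a μ (uh ℓ μ) v = a μ (u μ - uh ℓ μ) v := by
    intro ℓ μ v; rw [hsubL, hu]
  have residle : ∀ ℓ μ i, resid μ (uh ℓ μ) i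
      ≤ Real.sqrt (a μ (u μ - uh ℓ μ) (u μ - uh ℓ μ)) := by
    intro ℓ μ i
    haveI : Nonempty (Xloc μ i) := ⟨0⟩
    rw [hresid]
    exact ciSup_le fun v => by simp only [hnum]; exact ratio μ _ _
  have residnn : ∀ ℓ μ i, 0 ≤ resid μ (uh ℓ μ) i := by
    intro ℓ μ i
    rw [hresid]
    have hb : BddAbove (Set.range fun v : Xloc μ i =>
        (f μ v - a μ (uh ℓ μ) v) / Real.sqrt (a μ (v : X) (v : X))) := by
      refine ⟨Real.sqrt (a μ (u μ - uh ℓ μ) (u μ - uh ℓ μ)), ?_⟩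
      rintro x ⟨v, rfl⟩
      simp only [hnum]; exact ratio μ _ _
    have h0 := le_ciSup hb (⟨0, (Xloc μ i).zero_mem⟩ : Xloc μ i)
    simpa [hzeroR] using h0
  set K := cpu * Real.sqrt Ndd with hKdef
  have hKpos : 0 < K := mul_pos hcpu (Real.sqrt_pos.mpr (by exact_mod_cast hNdd))
  set R := fun ℓ => resid (m ℓ) (uh ℓ (m ℓ)) (k ℓ) with hRdef
  have hRnn : ∀ ℓ, 0 ≤ R ℓ := fun ℓ => residnn ℓ (m ℓ) (k ℓ)
  have err_le : ∀ ℓ μ,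
      Real.sqrt (a μ (u μ - uh ℓ μ) (u μ - uh ℓ μ)) ≤ K * R ℓ := by
    intro ℓ μ
    have h1 : Real.sqrt (a μ (u μ - uh ℓ μ) (u μ - uh ℓ μ))
        ≤ cpu * Real.sqrt (∑ i, resid μ (uh ℓ μ) i ^ 2) := by
      by_cases he : u μ - uh ℓ μ = 0
      · rw [he, hzeroR, Real.sqrt_zero]
        have : 0 ≤ Real.sqrt (∑ i, resid μ (uh ℓ μ) i ^ 2) := Real.sqrt_nonneg _
        positivity
      · have hb : BddAbove (Set.range fun v : {v : X // v ≠ 0} =>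
            (f μ v - a μ (uh ℓ μ) v) / Real.sqrt (a μ (v : X) (v : X))) := by
          refine ⟨Real.sqrt (a μ (u μ - uh ℓ μ) (u μ - uh ℓ μ)), ?_⟩
          rintro x ⟨v, rfl⟩
          simp only [hnum]; exact ratio μ _ _
        have hmem := le_ciSup hb (⟨u μ - uh ℓ μ, he⟩ : {v : X // v ≠ 0})
        have hval : (f μ (u μ - uh ℓ μ) - a μ (uh ℓ μ) (u μ - uh ℓ μ))
            / Real.sqrt (a μ (u μ - uh ℓ μ) (u μ - uh ℓ μ))
            = Real.sqrt (a μ (u μ - uh ℓ μ) (u μ - uh ℓ μ)) := by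
          rw [hnum, Real.div_sqrt]
        rw [hval] at hmem
        exact hmem.trans (hglobal μ (uh ℓ μ))
    refine h1.trans ?_
    have h2 : (∑ i, resid μ (uh ℓ μ) i ^ 2) ≤ (Ndd : ℝ) * R ℓ ^ 2 := by
      calc (∑ i, resid μ (uh ℓ μ) i ^ 2) ≤ ∑ _i : Fin Ndd, R ℓ ^ 2 :=
            Finset.sum_le_sum fun i _ => pow_le_pow_left₀ (residnn ℓ μ i) (hmax ℓ μ i) 2
        _ = (Ndd : ℝ) * R ℓ ^ 2 := by simp [Finset.sum_const, nsmul_eq_mul]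
    have h3 : Real.sqrt (∑ i, resid μ (uh ℓ μ) i ^ 2) ≤ Real.sqrt Ndd * R ℓ := by
      rw [show Real.sqrt Ndd * R ℓ = Real.sqrt ((Ndd : ℝ) * R ℓ ^ 2) by
        rw [Real.sqrt_mul (Nat.cast_nonneg _), Real.sqrt_sq (hRnn ℓ)]]
      exact Real.sqrt_le_sqrt h2
    calc cpu * Real.sqrt (∑ i, resid μ (uh ℓ μ) i ^ 2) ≤ cpu * (Real.sqrt Ndd * R ℓ) :=
          mul_le_mul_of_nonneg_left h3 hcpu.le
      _ = K * R ℓ := by rw [hKdef]; ring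
  have E2 : ∀ ℓ μ, a μ (u μ - uh ℓ μ) (u μ - uh ℓ μ) ≤ K ^ 2 * R ℓ ^ 2 := by
    intro ℓ μ
    have h1 := pow_le_pow_left₀ (Real.sqrt_nonneg _) (err_le ℓ μ) 2
    rw [Real.sq_sqrt (posd μ _)] at h1
    calc a μ (u μ - uh ℓ μ) (u μ - uh ℓ μ) ≤ (K * R ℓ) ^ 2 := h1
      _ = K ^ 2 * R ℓ ^ 2 := by ring
  have gal : ∀ ℓ μ (v : X), v ∈ Z ℓ → a μ (u μ - uh ℓ μ) v = 0 := by
    intro ℓ μ v hv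
    rw [hsubL, hu, hgal ℓ μ v hv, sub_self]
  have bestapprox : ∀ ℓ μ (z : X), z ∈ Z ℓ →
      a μ (u μ - uh ℓ μ) (u μ - uh ℓ μ) ≤ a μ (u μ - z) (u μ - z) := by
    intro ℓ μ z hz
    have hd : uh ℓ μ - z ∈ Z ℓ := Submodule.sub_mem _ (huhZ ℓ μ) hz
    have key : a μ (u μ - z) (u μ - z)
        = a μ (u μ - uh ℓ μ) (u μ - uh ℓ μ) + a μ (uh ℓ μ - z) (uh ℓ μ - z) := by
      have hsplit : u μ - z = (u μ - uh ℓ μ) + (uh ℓ μ - z) := by abel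
      have h1 : a μ (u μ - uh ℓ μ) ((u μ - uh ℓ μ) + (uh ℓ μ - z))
          = a μ (u μ - uh ℓ μ) (u μ - uh ℓ μ) := by
        rw [(hbilin₂ μ _).map_add, gal ℓ μ _ hd, add_zero]
      have h2 : a μ (uh ℓ μ - z) ((u μ - uh ℓ μ) + (uh ℓ μ - z))
          = a μ (uh ℓ μ - z) (uh ℓ μ - z) := by
        rw [(hbilin₂ μ _).map_add, hsymm μ (uh ℓ μ - z) (u μ - uh ℓ μ), gal ℓ μ _ hd, zero_add]
      rw [hsplit, haddL, h1, h2]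
    rw [key]
    linarith [posd μ (uh ℓ μ - z)]
  have hZmono : ∀ ℓ, Z ℓ ≤ Z (ℓ+1) := fun ℓ => le_trans le_sup_left (hnest ℓ)
  have mono : ∀ ℓ μ, a μ (u μ - uh (ℓ+1) μ) (u μ - uh (ℓ+1) μ)
      ≤ a μ (u μ - uh ℓ μ) (u μ - uh ℓ μ) :=
    fun ℓ μ => bestapprox (ℓ+1) μ (uh ℓ μ) (hZmono ℓ (huhZ ℓ μ))
  have mono' : ∀ t ℓ, t ≤ ℓ → ∀ μ, a μ (u μ - uh ℓ μ) (u μ - uh ℓ μ)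
      ≤ a μ (u μ - uh t μ) (u μ - uh t μ) := by
    intro t ℓ h
    induction ℓ, h using Nat.le_induction with
    | base => intro μ; exact le_rfl
    | succ ℓ hle ih => intro μ; exact (mono ℓ μ).trans (ih μ)
  have step : ∀ ℓ, a (m ℓ) (u (m ℓ) - uh (ℓ+1) (m ℓ)) (u (m ℓ) - uh (ℓ+1) (m ℓ))
      ≤ a (m ℓ) (u (m ℓ) - uh ℓ (m ℓ)) (u (m ℓ) - uh ℓ (m ℓ)) - R ℓ ^ 2 := by
    intro ℓ
    set μ := m ℓ with hμ
    set w := uh ℓ (m ℓ) with hw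
    set g := uloc ℓ with hg
    have locorth : ∀ v ∈ Xloc (m ℓ) (k ℓ), a μ (u μ - w - g) v = 0 := by
      intro v hv
      have hh : u μ - w - g = u μ - (w + g) := by abel
      rw [hh, hsubL, hu, huloc ℓ v hv, sub_self]
    have hRle : R ℓ ≤ Real.sqrt (a μ g g) := by
      haveI : Nonempty (Xloc (m ℓ) (k ℓ)) := ⟨0⟩
      rw [hRdef]
      simp only
      rw [hresid]
      refine ciSup_le fun v => ?_
      have hval : f μ (v:X) - a μ w (v:X) = a μ g (v:X) := by
        have h1 := huloc ℓ (v:X) v.2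
        rw [haddL] at h1
        linarith
      show (f μ (v:X) - a μ w (v:X)) / Real.sqrt (a μ (v:X) (v:X)) ≤ Real.sqrt (a μ g g)
      rw [hval]
      exact ratio μ g (v:X)
    have hgg : R ℓ ^ 2 ≤ a μ g g := by
      have h := pow_le_pow_left₀ (hRnn ℓ) hRle 2
      rwa [Real.sq_sqrt (posd μ g)] at h
    have horth2 : a μ (u μ - w - g) g = 0 := locorth g (hulocmem ℓ)
    have hsplit : a μ (u μ - w - g) (u μ - w - g) = a μ (u μ - w) (u μ - w) - a μ g g := by
      have he_g : a μ (u μ - w) g = a μ g g := by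
        have h := horth2
        rw [hsubL] at h
        linarith
      have t1 : a μ (u μ - w - g) (u μ - w - g)
          = a μ (u μ - w - g) (u μ - w) - a μ (u μ - w - g) g := hsubR μ _ _ _
      have t2 : a μ (u μ - w - g) (u μ - w)
          = a μ (u μ - w) (u μ - w) - a μ g (u μ - w) := hsubL μ _ _ _
      have t3 : a μ g (u μ - w) = a μ (u μ - w) g := hsymm μ g _
      rw [t1, horth2, t2, t3, he_g, sub_zero]
    have hmem2 : w + g ∈ Z (ℓ+1) :=
      (Z (ℓ+1)).add_mem (hZmono ℓ (huhZ ℓ (m ℓ)))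
        (hnest ℓ (Submodule.mem_sup_right (Submodule.mem_span_singleton_self (uloc ℓ))))
    have hba := bestapprox (ℓ+1) μ (w + g) hmem2
    have hh2 : u μ - (w + g) = u μ - w - g := by abel
    rw [hh2, hsplit] at hba
    linarith
  set q : ℝ := max (1/2) (1 - 1/K^2) with hqdef
  have hq0 : 0 < q := lt_of_lt_of_le one_half_pos (le_max_left _ _)
  have hq1 : q < 1 := by
    apply max_lt (by norm_num)
    have : 0 < 1/K^2 := by positivity
    linarith
  have contraction : ∀ ℓ, a (m ℓ) (u (m ℓ) - uh (ℓ+1) (m ℓ)) (u (m ℓ) - uh (ℓ+1) (m ℓ))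
      ≤ q * a (m ℓ) (u (m ℓ) - uh ℓ (m ℓ)) (u (m ℓ) - uh ℓ (m ℓ)) := by
    intro ℓ
    have h1 := step ℓ
    have h2 := E2 ℓ (m ℓ)
    have hKK : (0:ℝ) < K^2 := by positivity
    have h3 : a (m ℓ) (u (m ℓ) - uh ℓ (m ℓ)) (u (m ℓ) - uh ℓ (m ℓ)) / K^2 ≤ R ℓ ^ 2 :=
      (div_le_iff₀ hKK).2 (by linarith)
    have h4 : (1 - 1/K^2) * a (m ℓ) (u (m ℓ) - uh ℓ (m ℓ)) (u (m ℓ) - uh ℓ (m ℓ))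
        ≤ q * a (m ℓ) (u (m ℓ) - uh ℓ (m ℓ)) (u (m ℓ) - uh ℓ (m ℓ)) :=
      mul_le_mul_of_nonneg_right (le_max_right _ _) (posd _ _)
    have h5 : a (m ℓ) (u (m ℓ) - uh ℓ (m ℓ)) (u (m ℓ) - uh ℓ (m ℓ))
        - a (m ℓ) (u (m ℓ) - uh ℓ (m ℓ)) (u (m ℓ) - uh ℓ (m ℓ)) / K^2
        = (1 - 1/K^2) * a (m ℓ) (u (m ℓ) - uh ℓ (m ℓ)) (u (m ℓ) - uh ℓ (m ℓ)) := by ring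
    linarith
  set c : Fin n → ℕ → ℕ := fun μ ℓ => ((Finset.range ℓ).filter (fun t => m t = μ)).card
    with hcdef
  have decay : ∀ ℓ μ, a μ (u μ - uh ℓ μ) (u μ - uh ℓ μ)
      ≤ q ^ (c μ ℓ) * a μ (u μ - uh 0 μ) (u μ - uh 0 μ) := by
    intro ℓ
    induction ℓ with
    | zero => intro μ; simp [hcdef]
    | succ ℓ ih =>
      intro μ
      by_cases h : m ℓ = μ
      · have hc : c μ (ℓ+1) = c μ ℓ + 1 := by
          simp only [hcdef]
          rw [Finset.range_add_one, Finset.filter_insert, if_pos h]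
          exact Finset.card_insert_of_notMem (by simp)
        have h1 : a μ (u μ - uh (ℓ+1) μ) (u μ - uh (ℓ+1) μ)
            ≤ q * a μ (u μ - uh ℓ μ) (u μ - uh ℓ μ) := by
          rw [← h]; exact contraction ℓ
        rw [hc]
        calc a μ (u μ - uh (ℓ+1) μ) (u μ - uh (ℓ+1) μ)
            ≤ q * a μ (u μ - uh ℓ μ) (u μ - uh ℓ μ) := h1
          _ ≤ q * (q ^ (c μ ℓ) * a μ (u μ - uh 0 μ) (u μ - uh 0 μ)) :=
              mul_le_mul_of_nonneg_left (ih μ) hq0.le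
          _ = q ^ (c μ ℓ + 1) * a μ (u μ - uh 0 μ) (u μ - uh 0 μ) := by ring
      · have hc : c μ (ℓ+1) = c μ ℓ := by
          simp only [hcdef]
          rw [Finset.range_add_one, Finset.filter_insert, if_neg h]
        rw [hc]
        exact (mono ℓ μ).trans (ih μ)
  set E0 : ℝ := 1 + ∑ μ, a μ (u μ - uh 0 μ) (u μ - uh 0 μ) with hE0def
  have hE0pos : 0 < E0 := by
    have h := Finset.sum_nonneg (fun μ (_ : μ ∈ Finset.univ) => posd μ (u μ - uh 0 μ))
    rw [hE0def]; linarith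
  have hE0le : ∀ μ, a μ (u μ - uh 0 μ) (u μ - uh 0 μ) ≤ E0 := by
    intro μ
    have h := Finset.single_le_sum (f := fun μ => a μ (u μ - uh 0 μ) (u μ - uh 0 μ))
      (fun i _ => posd i _) (Finset.mem_univ μ)
    rw [hE0def]; linarith
  have hn' : (0:ℝ) < n := by exact_mod_cast hn
  have hlogq : Real.log q < 0 := Real.log_neg hq0 hq1
  set α : ℝ := -(Real.log q)/(2*n) with hαdef
  set Cc : ℝ := Real.sqrt E0 * (1 + K) / Real.sqrt q with hCcdef
  have hαpos : 0 < α := by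
    rw [hαdef]
    exact div_pos (by linarith) (mul_pos two_pos hn')
  have hCcpos : 0 < Cc := by
    rw [hCcdef]
    exact div_pos (mul_pos (Real.sqrt_pos.2 hE0pos) (by linarith)) (Real.sqrt_pos.2 hq0)
  refine ⟨Cc, α, hCcpos, hαpos, ?_⟩
  intro ℓ μ
  rcases Nat.eq_zero_or_pos ℓ with h0 | hpos
  · subst h0
    simp only [Nat.cast_zero, mul_zero, neg_zero, Real.exp_zero, mul_one]
    refine (Real.sqrt_le_sqrt (hE0le μ)).trans ?_
    have hq1' : Real.sqrt q ≤ 1 := Real.sqrt_le_one.mpr hq1.le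
    calc Real.sqrt E0 = Real.sqrt E0 * 1 := (mul_one _).symm
      _ ≤ Real.sqrt E0 * ((1 + K)/Real.sqrt q) := by
          refine mul_le_mul_of_nonneg_left ?_ (Real.sqrt_nonneg _)
          rw [le_div_iff₀ (Real.sqrt_pos.2 hq0)]
          linarith
      _ = Cc := by rw [hCcdef]; ring
  · -- pigeonhole
    have hsum : ∑ μ' : Fin n, c μ' ℓ = ℓ := by
      simp only [hcdef]
      have h := Finset.card_eq_sum_card_fiberwise
        (s := Finset.range ℓ) (t := Finset.univ) (f := m) (fun x _ => Finset.mem_univ (m x))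
      simpa [Finset.card_range] using h.symm
    have hex : ∃ μ', ℓ ≤ n * c μ' ℓ := by
      haveI : Nonempty (Fin n) := ⟨⟨0, hn⟩⟩
      by_contra hcon
      push_neg at hcon
      have hlt : ∑ μ' : Fin n, n * c μ' ℓ < ∑ _μ' : Fin n, ℓ :=
        Finset.sum_lt_sum_of_nonempty Finset.univ_nonempty (fun i _ => hcon i)
      rw [← Finset.mul_sum, hsum, Finset.sum_const, Finset.card_univ, Fintype.card_fin,
        smul_eq_mul] at hlt
      exact lt_irrefl _ hlt
    obtain ⟨μ', hμ'⟩ := hex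
    have hc1 : 1 ≤ c μ' ℓ := by
      rcases Nat.eq_zero_or_pos (c μ' ℓ) with h | h
      · rw [h, mul_zero] at hμ'; omega
      · exact h
    have hSne : ((Finset.range ℓ).filter (fun t => m t = μ')).Nonempty :=
      Finset.card_pos.mp (by simp only [hcdef] at hc1; omega)
    set t0 := ((Finset.range ℓ).filter (fun t => m t = μ')).max' hSne with ht0def
    have ht0S : t0 ∈ (Finset.range ℓ).filter (fun t => m t = μ') :=
      Finset.max'_mem _ hSne
    have ht0lt : t0 < ℓ := Finset.mem_range.mp (Finset.mem_filter.mp ht0S).1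
    have hmt0 : m t0 = μ' := (Finset.mem_filter.mp ht0S).2
    have hcount : c μ' ℓ ≤ c μ' t0 + 1 := by
      have hsub : (Finset.range ℓ).filter (fun t => m t = μ')
          ⊆ insert t0 ((Finset.range t0).filter (fun t => m t = μ')) := by
        intro s hs
        rcases eq_or_lt_of_le (Finset.le_max' _ s hs) with h | h
        · rw [h]; exact Finset.mem_insert_self _ _
        · apply Finset.mem_insert_of_mem
          rw [Finset.mem_filter, Finset.mem_range]
          exact ⟨h, (Finset.mem_filter.mp hs).2⟩
      calc c μ' ℓ ≤ (insert t0 ((Finset.range t0).filter (fun t => m t = μ'))).card :=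
            Finset.card_le_card hsub
        _ ≤ ((Finset.range t0).filter (fun t => m t = μ')).card + 1 :=
            Finset.card_insert_le _ _
        _ = c μ' t0 + 1 := rfl
    have hℓle : ℓ ≤ n * (c μ' t0 + 1) := le_trans hμ' (Nat.mul_le_mul_left n hcount)
    have hA : a μ (u μ - uh ℓ μ) (u μ - uh ℓ μ) ≤ K^2 * (q ^ (c μ' t0) * E0) := by
      have s1 := mono' t0 ℓ (le_of_lt ht0lt) μ
      have s2 := E2 t0 μ
      have s3 : R t0 ^ 2 ≤ a (m t0) (u (m t0) - uh t0 (m t0)) (u (m t0) - uh t0 (m t0)) := by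
        have h1 := step t0
        have h2 := posd (m t0) (u (m t0) - uh (t0+1) (m t0))
        linarith
      rw [hmt0] at s3
      have s5 : a μ' (u μ' - uh t0 μ') (u μ' - uh t0 μ') ≤ q ^ (c μ' t0) * E0 :=
        (decay t0 μ').trans (mul_le_mul_of_nonneg_left (hE0le μ') (pow_nonneg hq0.le _))
      calc a μ (u μ - uh ℓ μ) (u μ - uh ℓ μ)
          ≤ a μ (u μ - uh t0 μ) (u μ - uh t0 μ) := s1
        _ ≤ K^2 * R t0 ^ 2 := s2
        _ ≤ K^2 * (q ^ (c μ' t0) * E0) :=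
            mul_le_mul_of_nonneg_left (s3.trans s5) (by positivity)
    have hexp : q ^ (c μ' t0 + 1) ≤ Real.exp (-α*ℓ) ^ 2 := by
      have hqpow : (q:ℝ) ^ (c μ' t0 + 1)
          = Real.exp (((c μ' t0 + 1 : ℕ) : ℝ) * Real.log q) := by
        rw [← Real.log_pow, Real.exp_log (pow_pos hq0 _)]
      rw [hqpow, sq, ← Real.exp_add]
      apply Real.exp_le_exp.mpr
      have hℓr : (ℓ:ℝ) ≤ n * ((c μ' t0 : ℝ) + 1) := by exact_mod_cast hℓle
      have hdiv : (ℓ:ℝ)/n ≤ ((c μ' t0 + 1 : ℕ) : ℝ) := by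
        rw [div_le_iff₀ hn']
        push_cast
        linarith
      have hmul := mul_le_mul_of_nonpos_right hdiv hlogq.le
      have heq : -α*ℓ + -α*ℓ = (ℓ:ℝ)/n * Real.log q := by
        rw [hαdef]
        field_simp
        ring
      linarith
    have hfinal : K^2 * (q ^ (c μ' t0) * E0) ≤ (Cc * Real.exp (-α*ℓ))^2 := by
      have e1 : (Cc * Real.exp (-α*ℓ))^2
          = E0 * (1+K)^2 * (Real.exp (-α*ℓ))^2 / q := by
        rw [hCcdef, mul_pow, div_pow, mul_pow, Real.sq_sqrt hE0pos.le, Real.sq_sqrt hq0.le]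
        ring
      have hKle : K^2 ≤ (1+K)^2 := by nlinarith [hKpos]
      have h6 : K^2 * q ^ (c μ' t0 + 1) ≤ (1+K)^2 * (Real.exp (-α*ℓ))^2 :=
        mul_le_mul hKle hexp (pow_nonneg hq0.le _) (by positivity)
      have e2 : K^2 * (q ^ (c μ' t0) * E0) = (E0/q) * (K^2 * q ^ (c μ' t0 + 1)) := by
        field_simp
        ring
      have e3 : E0 * (1+K)^2 * (Real.exp (-α*ℓ))^2 / q
          = (E0/q) * ((1+K)^2 * (Real.exp (-α*ℓ))^2) := by ring
      rw [e1, e3, e2]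
      exact mul_le_mul_of_nonneg_left h6 (by positivity)
    calc Real.sqrt (a μ (u μ - uh ℓ μ) (u μ - uh ℓ μ))
        ≤ Real.sqrt (K^2 * (q ^ (c μ' t0) * E0)) := Real.sqrt_le_sqrt hA
      _ ≤ Real.sqrt ((Cc * Real.exp (-α*ℓ))^2) := Real.sqrt_le_sqrt hfinal
      _ = Cc * Real.exp (-α*ℓ) :=
          Real.sqrt_sq (mul_nonneg hCcpos.le (Real.exp_nonneg _))
end
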